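/- Let G be a group satisfying: (i) x⁴ = 1 for all x, (ii) G is metabelian (γ₂(G) is abelian), (iii) G is nilpotent of class at most 4. Then for every h ∈ γ₂(G), h² ∈ γ₄(G). -/

import Mathlib

section Aux

open scoped commutatorElement

variable {H : Type*} [Group H]

private lemma swap_aux {a b p q r : H} (h : a * b = p * (q * r)) :
    ∀ t : H, a * (b * t) = p * (q * (r * t)) := by
  intro t
  rw [← mul_assoc, h, mul_assoc, mul_assoc]

private lemma comm_move {a b : H} (h : a * b = b * a) :
    ∀ t : H, a * (b * t) = b * (a * t) := by
  intro t
  rw [← mul_assoc, h, mul_assoc]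

private lemma pow4_cancel {a : H} (h : a ^ 4 = 1) :
    ∀ t : H, a * (a * (a * (a * t))) = t := by
  intro t
  rw [show a * (a * (a * (a * t))) = a ^ 4 * t by simp [pow_succ, mul_assoc], h, one_mul]

private lemma commElt_mem_L1 (a b : H) : ⁅a, b⁆ ∈ Subgroup.lowerCentralSeries (⊤ : Subgroup H) 1 := by
  rw [Subgroup.lowerCentralSeries_one, commutator_def]
  exact Subgroup.commutator_mem_commutator (Subgroup.mem_top a) (Subgroup.mem_top b)

private lemma commElt_mem_succ {a : H} {n : ℕ} (ha : a ∈ Subgroup.lowerCentralSeries (⊤ : Subgroup H) n) (b : H) :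
    ⁅a, b⁆ ∈ Subgroup.lowerCentralSeries (⊤ : Subgroup H) (n + 1) := by
  rw [Subgroup.lowerCentralSeries_succ]
  exact Subgroup.commutator_mem_commutator ha (Subgroup.mem_top b)

/-- Step A: if `c*y = y*(c*v)` with `v` commuting with `y` and `c`, and the relevant
fourth powers are trivial, then `v ^ 2 = 1`. -/
private lemma stepA {y c v : H} (hcy : c * y = y * (c * v))
    (hvy : v * y = y * v) (hvc : v * c = c * v)
    (h4c : c ^ 4 = 1) (h4y : y ^ 4 = 1) (h4v : v ^ 4 = 1) (h4cy : (c * y) ^ 4 = 1) :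
    v ^ 2 = 1 := by
  have hcy' := swap_aux hcy
  have hvy' := comm_move hvy
  have hvc' := comm_move hvc
  have e1 : (c * y) ^ 4 = c * (y * (c * (y * (c * (y * (c * y)))))) := by
    simp [pow_succ, mul_assoc]
  have key : c * (y * (c * (y * (c * (y * (c * y)))))) =
      y * (y * (y * (y * (c * (c * (c * (c *
        (v * (v * (v * (v * (v * (v * (v * (v * (v * v)))))))))))))))) := by
    simp only [hcy', hcy, hvy', hvy, hvc', hvc]
  rw [e1, key] at h4cy
  rw [pow4_cancel h4y, pow4_cancel h4c, pow4_cancel h4v] at h4cy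
  -- h4cy : v * (v * (v * (v * (v * v)))) = 1
  have h6 : v ^ 6 = 1 := by
    rw [show v ^ 6 = v * (v * (v * (v * (v * v)))) by simp [pow_succ, mul_assoc], h4cy]
  have hv2 : v ^ 2 = v ^ 2 * v ^ 4 := by rw [h4v, mul_one]
  rw [hv2, ← pow_add]
  exact h6

/-- Key lemma: in a group of exponent 4 whose derived subgroup is abelian and whose
lower central series vanishes at stage 3 (class at most 3), every element of the derived
subgroup squares to 1. -/
private lemma key_lemma (e4 : ∀ x : H, x ^ 4 = 1)
    (met : ∀ a ∈ Subgroup.lowerCentralSeries (⊤ : Subgroup H) 1, ∀ b ∈ Subgroup.lowerCentralSeries (⊤ : Subgroup H) 1, a * b = b * a)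
    (nil : Subgroup.lowerCentralSeries (⊤ : Subgroup H) 3 = ⊥) :
    ∀ k ∈ Subgroup.lowerCentralSeries (⊤ : Subgroup H) 1, k ^ 2 = 1 := by
  -- every element of γ₃ = Subgroup.lowerCentralSeries (⊤ : Subgroup H) 2 is central
  have cen : ∀ g ∈ Subgroup.lowerCentralSeries (⊤ : Subgroup H) 2, ∀ t : H, g * t = t * g := by
    intro g hg t
    have h3 : ⁅g, t⁆ ∈ Subgroup.lowerCentralSeries (⊤ : Subgroup H) 3 := commElt_mem_succ hg t
    rw [nil, Subgroup.mem_bot] at h3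
    exact commutatorElement_eq_one_iff_mul_comm.mp h3
  -- squares of "commutator words" are trivial
  have comm_sq : ∀ x y : H, (y⁻¹ * x⁻¹ * y * x) ^ 2 = 1 := by
    intro x y
    set c := y⁻¹ * x⁻¹ * y * x with hcdef
    have hc_mem : c ∈ Subgroup.lowerCentralSeries (⊤ : Subgroup H) 1 := by
      have : c = ⁅y⁻¹, x⁻¹⁆ := by rw [hcdef, commutatorElement_def]; simp only [inv_inv]
      rw [this]; exact commElt_mem_L1 _ _
    set u := c⁻¹ * x⁻¹ * c * x with hudef
    set v := c⁻¹ * y⁻¹ * c * y with hvdef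
    have hu_mem : u ∈ Subgroup.lowerCentralSeries (⊤ : Subgroup H) 2 := by
      have : u = ⁅c⁻¹, x⁻¹⁆ := by rw [hudef, commutatorElement_def]; simp only [inv_inv]
      rw [this]; exact commElt_mem_succ (inv_mem hc_mem) _
    have hv_mem : v ∈ Subgroup.lowerCentralSeries (⊤ : Subgroup H) 2 := by
      have : v = ⁅c⁻¹, y⁻¹⁆ := by rw [hvdef, commutatorElement_def]; simp only [inv_inv]
      rw [this]; exact commElt_mem_succ (inv_mem hc_mem) _
    have ucen := cen u hu_mem
    have vcen := cen v hv_mem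
    -- basic commutation relations
    have hyx : y * x = x * (y * c) := by rw [hcdef]; group
    have hcx : c * x = x * (c * u) := by rw [hudef]; group
    have hcy : c * y = y * (c * v) := by rw [hvdef]; group
    -- v squares to 1 (step A)
    have hv2 : v ^ 2 = 1 :=
      stepA hcy (vcen y) (vcen c) (e4 c) (e4 y) (e4 v) (e4 (c * y))
    -- collect (x*y)^4
    have hyx' := swap_aux hyx
    have hcx' := swap_aux hcx
    have hcy' := swap_aux hcy
    have hux' := comm_move (ucen x)
    have huy' := comm_move (ucen y)
    have huc' := comm_move (ucen c)
    have hvx' := comm_move (vcen x)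
    have hvy' := comm_move (vcen y)
    have hvc' := comm_move (vcen c)
    have hvu' := comm_move (vcen u)
    have e1 : (x * y) ^ 4 = x * (y * (x * (y * (x * (y * (x * y)))))) := by
      simp [pow_succ, mul_assoc]
    have key : x * (y * (x * (y * (x * (y * (x * y)))))) =
        x * (x * (x * (x * (y * (y * (y * (y * (c * (c * (c * (c * (c * (c * (u * (u * (u * (u * (v * (v * (v * (v * (v * (v * (v * (v * (v * (v * (v * (v * (v * (v))))))))))))))))))))))))))))))) := by
      simp only [hyx', hyx, hcx', hcx, hcy', hcy, hux', ucen x, huy', ucen y, huc', ucen c,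
        hvx', vcen x, hvy', vcen y, hvc', vcen c, hvu', vcen u]
    have h4xy := e4 (x * y)
    rw [e1, key] at h4xy
    rw [pow4_cancel (e4 x), pow4_cancel (e4 y), pow4_cancel (e4 c),
      pow4_cancel (e4 u), pow4_cancel (e4 v), pow4_cancel (e4 v), pow4_cancel (e4 v)] at h4xy
    -- h4xy : c * (c * (v * v)) = 1
    have hvv : v * v = 1 := by rw [← pow_two]; exact hv2
    rw [hvv, mul_one] at h4xy
    rw [pow_two]
    exact h4xy
  -- squares of commutators are trivial
  have sq_comm : ∀ a b : H, ⁅a, b⁆ ^ 2 = 1 := by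
    intro a b
    have := comm_sq b⁻¹ a⁻¹
    rw [inv_inv, inv_inv] at this
    rw [commutatorElement_def]
    exact this
  -- closure induction over the derived subgroup
  intro k hk
  have hk' : k ∈ Subgroup.closure { g : H | ∃ g₁ ∈ (⊤ : Subgroup H), ∃ g₂ ∈ (⊤ : Subgroup H), ⁅g₁, g₂⁆ = g } := by
    rwa [← Subgroup.commutator_def, ← commutator_def, ← Subgroup.lowerCentralSeries_one]
  refine Subgroup.closure_induction (p := fun g _ => g ^ 2 = 1) ?_ ?_ ?_ ?_ hk'
  · rintro g ⟨g₁, -, g₂, -, rfl⟩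
    exact sq_comm g₁ g₂
  · exact one_pow 2
  · intro p q hp hq hp2 hq2
    have hpL : p ∈ Subgroup.lowerCentralSeries (⊤ : Subgroup H) 1 := by
      rwa [Subgroup.lowerCentralSeries_one, commutator_def, Subgroup.commutator_def]
    have hqL : q ∈ Subgroup.lowerCentralSeries (⊤ : Subgroup H) 1 := by
      rwa [Subgroup.lowerCentralSeries_one, commutator_def, Subgroup.commutator_def]
    have hcomm : p * q = q * p := met p hpL q hqL
    calc (p * q) ^ 2 = p * (q * p * q) := by simp [pow_two, mul_assoc]
      _ = p * (p * q * q) := by rw [← hcomm]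
      _ = p ^ 2 * q ^ 2 := by simp [pow_two, mul_assoc]
      _ = 1 := by rw [hp2, hq2, one_mul]
  · intro p _ hp2
    rw [inv_pow, hp2, inv_one]

end Aux

theorem sq_of_gamma2_mem_gamma4 {G : Type*} [Group G]
    (hexp : ∀ x : G, x ^ 4 = 1)
    (hmet : ∀ a ∈ Subgroup.lowerCentralSeries (⊤ : Subgroup G) 1, ∀ b ∈ Subgroup.lowerCentralSeries (⊤ : Subgroup G) 1, a * b = b * a)
    (hnil : Subgroup.lowerCentralSeries (⊤ : Subgroup G) 4 = ⊥) :
    ∀ h ∈ Subgroup.lowerCentralSeries (⊤ : Subgroup G) 1, h ^ 2 ∈ Subgroup.lowerCentralSeries (⊤ : Subgroup G) 3 := by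
  intro h hh
  set N := Subgroup.lowerCentralSeries (⊤ : Subgroup G) 3 with hN
  let π : G →* G ⧸ N := QuotientGroup.mk' N
  have hπsurj : Function.Surjective π := QuotientGroup.mk'_surjective N
  -- the lower central series of the quotient is the image of the lower central series
  have hmap : ∀ n, Subgroup.lowerCentralSeries (⊤ : Subgroup (G ⧸ N)) n = (Subgroup.lowerCentralSeries (⊤ : Subgroup G) n).map π := by
    intro n
    induction n with
    | zero =>
      rw [Subgroup.lowerCentralSeries_zero, Subgroup.lowerCentralSeries_zero,
        Subgroup.map_top_of_surjective π hπsurj]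
    | succ n ih =>
      rw [Subgroup.lowerCentralSeries_succ, Subgroup.lowerCentralSeries_succ, ih]
      show ⁅Subgroup.map π (Subgroup.lowerCentralSeries (⊤ : Subgroup G) n), (⊤ : Subgroup (G ⧸ N))⁆ =
        Subgroup.map π ⁅Subgroup.lowerCentralSeries (⊤ : Subgroup G) n, (⊤ : Subgroup G)⁆
      rw [← Subgroup.map_top_of_surjective π hπsurj, Subgroup.map_commutator]
  -- hypotheses transfer to the quotient
  have e4' : ∀ x : G ⧸ N, x ^ 4 = 1 := by
    intro x
    obtain ⟨z, rfl⟩ := hπsurj x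
    rw [← map_pow, hexp z, map_one]
  have met' : ∀ a ∈ Subgroup.lowerCentralSeries (⊤ : Subgroup (G ⧸ N)) 1, ∀ b ∈ Subgroup.lowerCentralSeries (⊤ : Subgroup (G ⧸ N)) 1,
      a * b = b * a := by
    intro a ha b hb
    rw [hmap 1] at ha hb
    obtain ⟨a₀, ha₀, rfl⟩ := ha
    obtain ⟨b₀, hb₀, rfl⟩ := hb
    rw [← map_mul, ← map_mul, hmet a₀ ha₀ b₀ hb₀]
  have nil' : Subgroup.lowerCentralSeries (⊤ : Subgroup (G ⧸ N)) 3 = ⊥ := by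
    rw [hmap 3, ← hN, Subgroup.map_eq_bot_iff, QuotientGroup.ker_mk']
  -- apply the key lemma
  have hkmem : π h ∈ Subgroup.lowerCentralSeries (⊤ : Subgroup (G ⧸ N)) 1 := by
    rw [hmap 1]
    exact Subgroup.mem_map_of_mem π hh
  have := key_lemma e4' met' nil' (π h) hkmem
  rw [← map_pow] at this
  have : h ^ 2 ∈ N := by
    rwa [← QuotientGroup.ker_mk' N, MonoidHom.mem_ker]
  exact this
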